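/- In the binary rationalization setup, given target segments 0 ≤ μ¹ < μ* < μ² ≤ 1 with μ¹ in the low-price region and μ² in the high-price region, and valuations ω_1 < ω_2 with ω_1 − ω_2μ² < 0, there exists a strictly convex differentiable function c : [0,1] → ℝ such that c(μ¹) = c(μ²), c'(μ¹) = (ω_1 − ω_2μ²)/(μ² − μ¹), and c'(μ²) = ω_2. -/

import Mathlib

open Set Filter

/-- derivative of `max y 0 ^ 3` -/
lemma hasDerivAt_max_cube (x : ℝ) :
    HasDerivAt (fun y : ℝ => max y 0 ^ 3) (3 * max x 0 ^ 2) x := by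
  rcases lt_trichotomy x 0 with hx | hx | hx
  · have h : (fun y : ℝ => max y 0 ^ 3) =ᶠ[nhds x] fun _ => (0 : ℝ) := by
      filter_upwards [eventually_lt_nhds hx] with y hy
      simp [max_eq_right hy.le]
    have : HasDerivAt (fun _ : ℝ => (0 : ℝ)) 0 x := hasDerivAt_const x 0
    rw [max_eq_right hx.le]
    simpa using this.congr_of_eventuallyEq h
  · subst hx
    rw [hasDerivAt_iff_tendsto_slope]
    have hb : ∀ y : ℝ, ‖slope (fun y : ℝ => max y 0 ^ 3) 0 y‖ ≤ y ^ 2 := by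
      intro y
      rcases le_or_gt y 0 with hy | hy
      · simp [slope, max_eq_right hy, sq_nonneg]
      · rw [slope_def_field]
        rw [max_eq_left hy.le]
        have : (y ^ 3 - max (0:ℝ) 0 ^ 3) / (y - 0) = y ^ 2 := by
          field_simp; simp; ring
        rw [this]
        simp [abs_of_nonneg (sq_nonneg y), le_refl]
    have hg : Tendsto (fun y : ℝ => y ^ 2) (nhdsWithin 0 {(0:ℝ)}ᶜ) (nhds 0) := by
      have : Tendsto (fun y : ℝ => y ^ 2) (nhds 0) (nhds 0) := by
        simpa using (continuous_pow 2).tendsto (0 : ℝ)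
      exact this.mono_left nhdsWithin_le_nhds
    have := squeeze_zero_norm hb hg
    simpa using this
  · have h : (fun y : ℝ => max y 0 ^ 3) =ᶠ[nhds x] fun y => y ^ 3 := by
      filter_upwards [eventually_gt_nhds hx] with y hy
      simp [max_eq_left hy.le]
    have : HasDerivAt (fun y : ℝ => y ^ 3) (3 * x ^ 2) x := by
      simpa using hasDerivAt_pow 3 x
    rw [max_eq_left hx.le]
    exact this.congr_of_eventuallyEq h

/-- derivative of `max y 0 ^ 2` -/
lemma hasDerivAt_max_sq (x : ℝ) :
    HasDerivAt (fun y : ℝ => max y 0 ^ 2) (2 * max x 0) x := by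
  rcases lt_trichotomy x 0 with hx | hx | hx
  · have h : (fun y : ℝ => max y 0 ^ 2) =ᶠ[nhds x] fun _ => (0 : ℝ) := by
      filter_upwards [eventually_lt_nhds hx] with y hy
      simp [max_eq_right hy.le]
    have : HasDerivAt (fun _ : ℝ => (0 : ℝ)) 0 x := hasDerivAt_const x 0
    rw [max_eq_right hx.le]
    simpa using this.congr_of_eventuallyEq h
  · subst hx
    rw [hasDerivAt_iff_tendsto_slope]
    have hb : ∀ y : ℝ, ‖slope (fun y : ℝ => max y 0 ^ 2) 0 y‖ ≤ |y| := by
      intro y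
      rcases le_or_gt y 0 with hy | hy
      · simp [slope, max_eq_right hy, abs_nonneg]
      · rw [slope_def_field]
        rw [max_eq_left hy.le]
        have : (y ^ 2 - max (0:ℝ) 0 ^ 2) / (y - 0) = y := by
          field_simp; simp; ring
        rw [this]
        simp [le_refl]
    have hg : Tendsto (fun y : ℝ => |y|) (nhdsWithin 0 {(0:ℝ)}ᶜ) (nhds 0) := by
      have : Tendsto (fun y : ℝ => |y|) (nhds 0) (nhds 0) := by
        simpa using continuous_abs.tendsto (0 : ℝ)
      exact this.mono_left nhdsWithin_le_nhds
    have := squeeze_zero_norm hb hg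
    simpa using this
  · have h : (fun y : ℝ => max y 0 ^ 2) =ᶠ[nhds x] fun y => y ^ 2 := by
      filter_upwards [eventually_gt_nhds hx] with y hy
      simp [max_eq_left hy.le]
    have : HasDerivAt (fun y : ℝ => y ^ 2) (2 * x) x := by
      simpa using hasDerivAt_pow 2 x
    rw [max_eq_left hx.le]
    exact this.congr_of_eventuallyEq h

/-- Key construction, case `0 ≤ d1 + d2`. -/
lemma key_lemma (μ1 μ2 d1 d2 : ℝ) (hμ : μ1 < μ2) (hd1 : d1 < 0) (hd2 : 0 < d2)
    (hsum : 0 ≤ d1 + d2) :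
    ∃ c : ℝ → ℝ, StrictConvexOn ℝ Set.univ c ∧ Differentiable ℝ c ∧
      c μ1 = c μ2 ∧ deriv c μ1 = d1 ∧ deriv c μ2 = d2 := by
  set Δ := μ2 - μ1 with hΔdef
  have hΔ : 0 < Δ := by simp [hΔdef]; linarith
  set s := d1 + d2 with hsdef
  set τ : ℝ := min (Δ / 2) ((-d1) * Δ / (2 * s + 1)) with hτdef
  have hs1 : (0:ℝ) < 2 * s + 1 := by linarith
  have hτ0 : 0 < τ :=
    lt_min (by linarith) (div_pos (mul_pos (by linarith) hΔ) hs1)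
  have hτhalf : τ ≤ Δ / 2 := min_le_left _ _
  have hτd : τ * (2 * s + 1) ≤ (-d1) * Δ := by
    have := min_le_right (Δ / 2) ((-d1) * Δ / (2 * s + 1))
    rw [← hτdef] at this
    calc τ * (2 * s + 1) ≤ ((-d1) * Δ / (2 * s + 1)) * (2 * s + 1) := by
          exact mul_le_mul_of_nonneg_right this hs1.le
      _ = (-d1) * Δ := by field_simp
  have hden : (0:ℝ) < 3 - 2 * τ / Δ := by
    have : 2 * τ / Δ ≤ 1 := by
      rw [div_le_one hΔ]; linarith
    linarith
  set b : ℝ := s / (τ ^ 2 * (3 - 2 * τ / Δ)) with hbdef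
  have hb : 0 ≤ b := div_nonneg hsum (by positivity)
  have hid : b * τ ^ 2 * (3 * Δ - 2 * τ) = s * Δ := by
    have hkey : b * (τ ^ 2 * (3 - 2 * τ / Δ)) = s :=
      div_mul_cancel₀ _ (ne_of_gt (mul_pos (pow_pos hτ0 2) hden))
    have e : (3 - 2 * τ / Δ) * Δ = 3 * Δ - 2 * τ := by
      field_simp
    linear_combination Δ * hkey - b * τ ^ 2 * e
  set t : ℝ := μ2 - τ with htdef
  have hμ1t : μ1 ≤ t := by simp [htdef]; linarith
  set L : ℝ := -(b * τ ^ 3) / Δ with hLdef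
  set a : ℝ := (L - d1) / Δ with hadef
  -- bound : b * τ ^ 3 ≤ (-d1) * Δ / 4
  have hbτ2 : 2 * (b * τ ^ 2) ≤ s := by
    have h1 : 0 ≤ b * τ ^ 2 := by positivity
    nlinarith [mul_nonneg h1 (by linarith : (0:ℝ) ≤ Δ - 2 * τ)]
  have hbτ3 : 4 * (b * τ ^ 3) ≤ (-d1) * Δ := by
    nlinarith [mul_nonneg hτ0.le (sub_nonneg.mpr hbτ2), mul_nonneg hsum hτ0.le]
  have ha : 0 < a := by
    rw [hadef, hLdef]
    apply div_pos _ hΔ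
    have : b * τ ^ 3 < (-d1) * Δ := by nlinarith
    have h2 : -(b * τ ^ 3) / Δ > d1 := by
      rw [gt_iff_lt, lt_div_iff₀ hΔ]; nlinarith
    linarith
  -- the function
  set c : ℝ → ℝ := fun x => a * ((x - μ1) * (x - μ2)) + b * max (x - t) 0 ^ 3 + L * (x - μ1)
    with hcdef
  set c' : ℝ → ℝ := fun x => a * ((x - μ1) + (x - μ2)) + b * (3 * max (x - t) 0 ^ 2) + L
    with hc'def
  have hder : ∀ x, HasDerivAt c (c' x) x := by
    intro x
    have h1 : HasDerivAt (fun x : ℝ => (x - μ1) * (x - μ2)) (1 * (x - μ2) + (x - μ1) * 1) x :=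
      ((hasDerivAt_id x).sub_const μ1).mul ((hasDerivAt_id x).sub_const μ2)
    have h2 : HasDerivAt (fun x : ℝ => max (x - t) 0 ^ 3) (3 * max (x - t) 0 ^ 2 * 1) x :=
      by have := (hasDerivAt_max_cube (x - t)).comp x ((hasDerivAt_id x).sub_const t); exact this
    have h3 : HasDerivAt (fun x : ℝ => x - μ1) 1 x := (hasDerivAt_id x).sub_const μ1
    have := ((h1.const_mul a).add (h2.const_mul b)).add (h3.const_mul L)
    refine this.congr_deriv ?_
    rw [hc'def]; ring
  have hderiv_eq : deriv c = c' := funext fun x => (hder x).deriv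
  have hdiff : Differentiable ℝ c := fun x => (hder x).differentiableAt
  have hder2 : ∀ x, HasDerivAt c' (2 * a + b * (3 * (2 * max (x - t) 0))) x := by
    intro x
    have h1 : HasDerivAt (fun x : ℝ => (x - μ1) + (x - μ2)) (1 + 1) x :=
      ((hasDerivAt_id x).sub_const μ1).add ((hasDerivAt_id x).sub_const μ2)
    have h2 : HasDerivAt (fun x : ℝ => max (x - t) 0 ^ 2) (2 * max (x - t) 0 * 1) x :=
      by have := (hasDerivAt_max_sq (x - t)).comp x ((hasDerivAt_id x).sub_const t); exact this
    have := (((h1.const_mul a).add ((h2.const_mul 3).const_mul b)).add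
      (hasDerivAt_const x L))
    refine this.congr_deriv ?_
    ring
  have hconv : StrictConvexOn ℝ Set.univ c := by
    apply strictConvexOn_univ_of_deriv2_pos hdiff.continuous
    intro x
    have h2 : deriv^[2] c x = deriv (deriv c) x := by
      rw [Function.iterate_succ_apply, Function.iterate_one]
    rw [h2, hderiv_eq, (hder2 x).deriv]
    have h4 : 0 ≤ b * (3 * (2 * max (x - t) 0)) := by positivity
    linarith
  have hmax1 : max (μ1 - t) 0 = 0 := max_eq_right (by linarith)
  have hmax2 : max (μ2 - t) 0 = τ := by
    rw [htdef]; rw [max_eq_left (by linarith)]; ring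
  refine ⟨c, hconv, hdiff, ?_, ?_, ?_⟩
  · -- values equal
    rw [hcdef]
    simp only [hmax1, hmax2]
    have hLΔ : L * Δ = -(b * τ ^ 3) := div_mul_cancel₀ _ hΔ.ne'
    linear_combination (-1 : ℝ) * hLΔ + L * hΔdef
  · -- derivative at μ1
    rw [hderiv_eq, hc'def]
    simp only [hmax1]
    have haΔ : a * Δ = L - d1 := div_mul_cancel₀ _ hΔ.ne'
    linear_combination (-1 : ℝ) * haΔ + a * hΔdef
  · -- derivative at μ2
    rw [hderiv_eq, hc'def]
    simp only [hmax2]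
    have haΔ : a * Δ = L - d1 := div_mul_cancel₀ _ hΔ.ne'
    have hLΔ : L * Δ = -(b * τ ^ 3) := div_mul_cancel₀ _ hΔ.ne'
    have h7 : (3 * (b * τ ^ 2) + 2 * L - (d1 + d2)) * Δ = 0 := by
      linear_combination 2 * hLΔ + hid + Δ * hsdef
    have h8 : 3 * (b * τ ^ 2) + 2 * L = d1 + d2 := by
      rcases mul_eq_zero.mp h7 with h' | h'
      · linarith
      · exact absurd h' hΔ.ne'
    linear_combination haΔ + h8 - a * hΔdef

/-- Full version without the sign condition on `d1 + d2`, via reflection. -/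
lemma key_lemma2 (μ1 μ2 d1 d2 : ℝ) (hμ : μ1 < μ2) (hd1 : d1 < 0) (hd2 : 0 < d2) :
    ∃ c : ℝ → ℝ, StrictConvexOn ℝ Set.univ c ∧ Differentiable ℝ c ∧
      c μ1 = c μ2 ∧ deriv c μ1 = d1 ∧ deriv c μ2 = d2 := by
  rcases le_or_gt 0 (d1 + d2) with h | h
  · exact key_lemma μ1 μ2 d1 d2 hμ hd1 hd2 h
  · obtain ⟨c, hconv, hdiff, hval, hD1, hD2⟩ :=
      key_lemma μ1 μ2 (-d2) (-d1) hμ (by linarith) (by linarith) (by linarith)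
    set S := μ1 + μ2 with hS
    refine ⟨fun x => c (S - x), ?_, ?_, ?_, ?_, ?_⟩
    · refine ⟨convex_univ, fun x _ y _ hxy p q hp hq hpq => ?_⟩
      have hA : S - (p • x + q • y) = p • (S - x) + q • (S - y) := by
        simp only [smul_eq_mul]
        linear_combination S * hpq.symm
      show c (S - (p • x + q • y)) < p • c (S - x) + q • c (S - y)
      rw [hA]
      refine hconv.2 (mem_univ _) (mem_univ _) ?_ hp hq hpq
      intro hcontra
      exact hxy (by linarith)
    · exact hdiff.comp ((differentiable_const S).sub differentiable_id)
    · have e1 : S - μ1 = μ2 := by rw [hS]; ring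
      have e2 : S - μ2 = μ1 := by rw [hS]; ring
      simp only [e1, e2]
      exact hval.symm
    · have hd : HasDerivAt (fun x => c (S - x)) (deriv c (S - μ1) * (0 - 1)) μ1 :=
        ((hdiff (S - μ1)).hasDerivAt).comp μ1 ((hasDerivAt_const μ1 S).sub (hasDerivAt_id μ1))
      have e1 : S - μ1 = μ2 := by rw [hS]; ring
      rw [hd.deriv, e1, hD2]; ring
    · have hd : HasDerivAt (fun x => c (S - x)) (deriv c (S - μ2) * (0 - 1)) μ2 :=
        ((hdiff (S - μ2)).hasDerivAt).comp μ2 ((hasDerivAt_const μ2 S).sub (hasDerivAt_id μ2))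
      have e2 : S - μ2 = μ1 := by rw [hS]; ring
      rw [hd.deriv, e2, hD1]; ring

theorem stmt_17 (ω1 ω2 μ1 μstar μ2 : ℝ)
    (h0 : 0 ≤ μ1) (h1 : μ1 < μstar) (h2 : μstar < μ2) (h3 : μ2 ≤ 1)
    (hω1 : 0 < ω1) (hω12 : ω1 < ω2) (hhigh : ω1 - ω2 * μ2 < 0) :
    ∃ c : ℝ → ℝ, StrictConvexOn ℝ (Set.Icc (0:ℝ) 1) c ∧ Differentiable ℝ c ∧
      c μ1 = c μ2 ∧
      deriv c μ1 = (ω1 - ω2 * μ2) / (μ2 - μ1) ∧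
      deriv c μ2 = ω2 := by
  have hμ : μ1 < μ2 := h1.trans h2
  have hΔ : 0 < μ2 - μ1 := by linarith
  have hd1 : (ω1 - ω2 * μ2) / (μ2 - μ1) < 0 := div_neg_of_neg_of_pos hhigh hΔ
  have hd2 : 0 < ω2 := hω1.trans hω12
  obtain ⟨c, hconv, hdiff, hval, hD1, hD2⟩ :=
    key_lemma2 μ1 μ2 ((ω1 - ω2 * μ2) / (μ2 - μ1)) ω2 hμ hd1 hd2
  exact ⟨c, hconv.subset (Set.subset_univ _) (convex_Icc 0 1), hdiff, hval, hD1, hD2⟩
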